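/- Let p be a prime and for k ≥ 0 let a_p(k) denote the number of orbits of the right-multiplication action of SL(2, ℤ/pℤ) on k×2 matrices over ℤ/pℤ. Then for every n ≥ 1, a_p(n+1) − a_p(n) = p^{n−1}(pⁿ + p − 1). -/
import Mathlib

/-- The orbit relation of the right-multiplication action of `SL(2, ℤ/pℤ)`
on `k × 2` matrices over `ℤ/pℤ`. -/
def slOrbRel (p k : ℕ) :
    Matrix (Fin k) (Fin 2) (ZMod p) → Matrix (Fin k) (Fin 2) (ZMod p) → Prop :=
  fun M N => ∃ A : Matrix.SpecialLinearGroup (Fin 2) (ZMod p),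
    M * (A : Matrix (Fin 2) (Fin 2) (ZMod p)) = N

/-- `a_p(k)`: the number of orbits of `SL(2, ℤ/pℤ)` on `k × 2` matrices over `ℤ/pℤ`. -/
noncomputable def slOrbCount (p k : ℕ) : ℕ := Nat.card (Quot (slOrbRel p k))


open Matrix MulAction Finset

section Aux

variable (p k : ℕ) [Fact p.Prime]

/-- The right-multiplication action as a left `MulAction` via inverses. -/
instance slAct : MulAction (Matrix.SpecialLinearGroup (Fin 2) (ZMod p))
    (Matrix (Fin k) (Fin 2) (ZMod p)) where
  smul A M := M * ((A⁻¹ : Matrix.SpecialLinearGroup (Fin 2) (ZMod p)) :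
    Matrix (Fin 2) (Fin 2) (ZMod p))
  one_smul M := by show M * _ = M; simp
  mul_smul A B M := by
    show M * _ = (M * _) * _
    rw [_root_.mul_inv_rev, Matrix.SpecialLinearGroup.coe_mul, Matrix.mul_assoc]

variable {p k}

lemma slAct_smul_def (A : Matrix.SpecialLinearGroup (Fin 2) (ZMod p))
    (M : Matrix (Fin k) (Fin 2) (ZMod p)) :
    A • M = M * ((A⁻¹ : Matrix.SpecialLinearGroup (Fin 2) (ZMod p)) :
      Matrix (Fin 2) (Fin 2) (ZMod p)) := rfl

end Aux

section CardLemmas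

variable (p : ℕ) [Fact p.Prime]

lemma card_mul_pair (s : ZMod p) :
    (Nat.card {x : ZMod p × ZMod p // x.1 * x.2 = s} : ℤ) =
      if s = 0 then 2 * (p : ℤ) - 1 else (p : ℤ) - 1 := by
  have hp1 : 1 ≤ p := (Fact.out : p.Prime).one_lt.le
  by_cases hs : s = 0
  · subst hs
    rw [if_pos rfl]
    -- complement is units × units
    have e : (ZMod p)ˣ × (ZMod p)ˣ ≃ {x : ZMod p × ZMod p // ¬ x.1 * x.2 = 0} :=
      { toFun := fun u => ⟨(u.1, u.2), by
          simpa using mul_ne_zero u.1.ne_zero u.2.ne_zero⟩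
        invFun := fun x => (Units.mk0 x.1.1 (left_ne_zero_of_mul x.2),
          Units.mk0 x.1.2 (right_ne_zero_of_mul x.2))
        left_inv := fun u => by ext <;> rfl
        right_inv := fun x => by ext <;> rfl }
    have hcompl : Nat.card {x : ZMod p × ZMod p // ¬ x.1 * x.2 = 0} = (p - 1) * (p - 1) := by
      rw [← Nat.card_congr e, Nat.card_prod, Nat.card_eq_fintype_card, ZMod.card_units]
    have htot : Nat.card {x : ZMod p × ZMod p // x.1 * x.2 = 0} +
        Nat.card {x : ZMod p × ZMod p // ¬ x.1 * x.2 = 0} = p * p := by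
      classical
      rw [Nat.card_eq_fintype_card, Nat.card_eq_fintype_card,
        Fintype.card_subtype_compl]
      have hle : Fintype.card {x : ZMod p × ZMod p // x.1 * x.2 = 0} ≤
          Fintype.card (ZMod p × ZMod p) := Fintype.card_subtype_le _
      rw [Fintype.card_prod, ZMod.card] at hle ⊢
      omega
    rw [hcompl] at htot
    have h2 := congrArg (Nat.cast (R := ℤ)) htot
    push_cast [Nat.cast_sub hp1] at h2
    linarith
  · rw [if_neg hs]
    have e : (ZMod p)ˣ ≃ {x : ZMod p × ZMod p // x.1 * x.2 = s} :=
      { toFun := fun u => ⟨(u, (u⁻¹ : (ZMod p)ˣ) * s), by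
          rw [← mul_assoc]
          norm_cast
          rw [Units.mul_inv]
          simp⟩
        invFun := fun x => Units.mk0 x.1.1 (fun h0 => hs (by rw [← x.2, h0, zero_mul]))
        left_inv := fun u => by ext; rfl
        right_inv := fun x => by
          apply Subtype.ext
          have h1 : x.1.1 ≠ 0 := fun h0 => hs (by rw [← x.2, h0, zero_mul])
          ext
          · rfl
          · show ((Units.mk0 x.1.1 h1)⁻¹ : (ZMod p)ˣ) * s = x.1.2
            rw [Units.val_inv_eq_inv_val, Units.val_mk0]
            field_simp
            linear_combination -x.2 }
    rw [← Nat.card_congr e, Nat.card_eq_fintype_card, ZMod.card_units,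
      Nat.cast_sub hp1]
    simp

end CardLemmas

section CardSL

variable (p : ℕ) [Fact p.Prime]

/-- helper: sum of an if-then-else over a fintype. -/
lemma sum_if_card {X : Type*} [Fintype X] (P : X → Prop) [DecidablePred P] (α β : ℤ) :
    ∑ x : X, (if P x then α else β) =
      (Nat.card {x // P x} : ℤ) * α +
        ((Nat.card X : ℤ) - (Nat.card {x // P x} : ℤ)) * β := by
  classical
  rw [Finset.sum_ite, Finset.sum_const, Finset.sum_const]
  have h1 : (Finset.univ.filter P).card = Fintype.card {x // P x} :=
    (Fintype.card_subtype P).symm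
  have h2 : (Finset.univ.filter (fun x => ¬ P x)).card = Fintype.card {x // ¬ P x} :=
    (Fintype.card_subtype _).symm
  have h3 : Fintype.card {x // ¬ P x} = Fintype.card X - Fintype.card {x // P x} :=
    Fintype.card_subtype_compl _
  have h4 : Fintype.card {x // P x} ≤ Fintype.card X := Fintype.card_subtype_le _
  rw [h1, h2, h3, nsmul_eq_mul, nsmul_eq_mul,
    Nat.card_eq_fintype_card, Nat.card_eq_fintype_card, Nat.cast_sub h4]

def slEquivSigma : Matrix.SpecialLinearGroup (Fin 2) (ZMod p) ≃
    Σ bc : ZMod p × ZMod p, {ad : ZMod p × ZMod p // ad.1 * ad.2 = 1 + bc.1 * bc.2} where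
  toFun A := ⟨((A : Matrix (Fin 2) (Fin 2) (ZMod p)) 0 1, (A : Matrix (Fin 2) (Fin 2) (ZMod p)) 1 0),
    ((A : Matrix (Fin 2) (Fin 2) (ZMod p)) 0 0, (A : Matrix (Fin 2) (Fin 2) (ZMod p)) 1 1), by
      have h := A.2
      rw [Matrix.det_fin_two] at h
      linear_combination h⟩
  invFun x := ⟨!![x.2.1.1, x.1.1; x.1.2, x.2.1.2], by
    rw [Matrix.det_fin_two_of]
    linear_combination x.2.2⟩
  left_inv A := by
    apply Subtype.ext
    simp only
    rw [Matrix.eta_fin_two (A : Matrix (Fin 2) (Fin 2) (ZMod p))]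
    simp
  right_inv x := by
    obtain ⟨⟨b, c⟩, ⟨⟨a, d⟩, h⟩⟩ := x
    simp

lemma card_SL : (Nat.card (Matrix.SpecialLinearGroup (Fin 2) (ZMod p)) : ℤ) =
    (p : ℤ) ^ 3 - p := by
  classical
  rw [Nat.card_congr (slEquivSigma p)]
  rw [Nat.card_eq_fintype_card, Fintype.card_sigma]
  push_cast
  have : ∀ bc : ZMod p × ZMod p,
      (Fintype.card {ad : ZMod p × ZMod p // ad.1 * ad.2 = 1 + bc.1 * bc.2} : ℤ) =
        if 1 + bc.1 * bc.2 = 0 then 2 * (p : ℤ) - 1 else (p : ℤ) - 1 := by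
    intro bc
    rw [← Nat.card_eq_fintype_card]
    exact card_mul_pair p _
  rw [Finset.sum_congr rfl (fun bc _ => this bc), sum_if_card]
  have hm1 : (Nat.card {x : ZMod p × ZMod p // 1 + x.1 * x.2 = 0} : ℤ) = (p : ℤ) - 1 := by
    have e : {x : ZMod p × ZMod p // 1 + x.1 * x.2 = 0} ≃
        {x : ZMod p × ZMod p // x.1 * x.2 = -1} :=
      Equiv.subtypeEquivRight (fun x => by constructor <;> intro h <;> linear_combination h)
    rw [Nat.card_congr e]
    have h := card_mul_pair p (-1 : ZMod p)
    rwa [if_neg (by simp : ¬ (-1 : ZMod p) = 0)] at h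
  have hprod : (Nat.card (ZMod p × ZMod p) : ℤ) = (p : ℤ) * p := by
    rw [Nat.card_prod, Nat.card_eq_fintype_card, ZMod.card]
    push_cast
    ring
  rw [hm1, hprod]
  ring

end CardSL

section Trace2

variable (p : ℕ) [Fact p.Prime]

def trace2EquivSigma : {A : Matrix.SpecialLinearGroup (Fin 2) (ZMod p) //
      Matrix.trace (A : Matrix (Fin 2) (Fin 2) (ZMod p)) = 2} ≃
    Σ a : ZMod p, {x : ZMod p × ZMod p // x.1 * x.2 = -(a - 1) ^ 2} where
  toFun A := ⟨((A : Matrix.SpecialLinearGroup (Fin 2) (ZMod p)) :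
      Matrix (Fin 2) (Fin 2) (ZMod p)) 0 0,
    (((A : Matrix.SpecialLinearGroup (Fin 2) (ZMod p)) : Matrix (Fin 2) (Fin 2) (ZMod p)) 0 1,
     ((A : Matrix.SpecialLinearGroup (Fin 2) (ZMod p)) : Matrix (Fin 2) (Fin 2) (ZMod p)) 1 0), by
      have hdet := (A.1).2
      have htr := A.2
      rw [Matrix.det_fin_two] at hdet
      rw [Matrix.trace_fin_two] at htr
      linear_combination (((A : Matrix.SpecialLinearGroup (Fin 2) (ZMod p)) :
        Matrix (Fin 2) (Fin 2) (ZMod p)) 0 0 - ((A : Matrix.SpecialLinearGroup (Fin 2) (ZMod p)) :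
        Matrix (Fin 2) (Fin 2) (ZMod p)) 1 1) * htr - hdet +
        (((A : Matrix.SpecialLinearGroup (Fin 2) (ZMod p)) :
        Matrix (Fin 2) (Fin 2) (ZMod p)) 1 1) * htr⟩
  invFun x := ⟨⟨!![x.1, x.2.1.1; x.2.1.2, 2 - x.1], by
      rw [Matrix.det_fin_two_of]
      linear_combination -x.2.2⟩, by
      rw [Matrix.trace_fin_two]
      show x.1 + (2 - x.1) = 2
      ring⟩
  left_inv A := by
    apply Subtype.ext
    apply Subtype.ext
    simp only
    rw [Matrix.eta_fin_two ((A : Matrix.SpecialLinearGroup (Fin 2) (ZMod p)) :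
      Matrix (Fin 2) (Fin 2) (ZMod p))]
    have htr := A.2
    rw [Matrix.trace_fin_two] at htr
    have : ((A : Matrix.SpecialLinearGroup (Fin 2) (ZMod p)) :
        Matrix (Fin 2) (Fin 2) (ZMod p)) 1 1 = 2 - ((A : Matrix.SpecialLinearGroup (Fin 2)
        (ZMod p)) : Matrix (Fin 2) (Fin 2) (ZMod p)) 0 0 := by linear_combination htr
    rw [this]
    simp
  right_inv x := by
    obtain ⟨a, ⟨⟨b, c⟩, h⟩⟩ := x
    simp

lemma card_trace2 : (Nat.card {A : Matrix.SpecialLinearGroup (Fin 2) (ZMod p) //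
    Matrix.trace (A : Matrix (Fin 2) (Fin 2) (ZMod p)) = 2} : ℤ) = (p : ℤ) ^ 2 := by
  classical
  rw [Nat.card_congr (trace2EquivSigma p)]
  rw [Nat.card_eq_fintype_card, Fintype.card_sigma]
  push_cast
  have : ∀ a : ZMod p,
      (Fintype.card {x : ZMod p × ZMod p // x.1 * x.2 = -(a - 1) ^ 2} : ℤ) =
        if a = 1 then 2 * (p : ℤ) - 1 else (p : ℤ) - 1 := by
    intro a
    rw [← Nat.card_eq_fintype_card]
    rw [card_mul_pair p _]
    congr 1
    simp only [eq_iff_iff, neg_eq_zero, pow_eq_zero_iff (two_ne_zero), sub_eq_zero]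
  rw [Finset.sum_congr rfl (fun a _ => this a), sum_if_card]
  have h1 : (Nat.card {x : ZMod p // x = 1} : ℤ) = 1 := by
    rw [Nat.card_eq_fintype_card, Fintype.card_subtype_eq]
    simp
  have h2 : (Nat.card (ZMod p) : ℤ) = p := by
    rw [Nat.card_eq_fintype_card, ZMod.card]
  rw [h1, h2]
  ring

end Trace2

section RowFix

variable (p : ℕ) [Fact p.Prime]

/-- row vectors fixed by right multiplication by `A` -/
def rowFix (A : Matrix.SpecialLinearGroup (Fin 2) (ZMod p)) : Type :=
  {v : Fin 2 → ZMod p // v ᵥ* (A : Matrix (Fin 2) (Fin 2) (ZMod p)) = v}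

lemma mem_rowFix_iff (A : Matrix.SpecialLinearGroup (Fin 2) (ZMod p)) (v : Fin 2 → ZMod p) :
    v ᵥ* (A : Matrix (Fin 2) (Fin 2) (ZMod p)) = v ↔
      (v 0 * (A : Matrix (Fin 2) (Fin 2) (ZMod p)) 0 0 +
        v 1 * (A : Matrix (Fin 2) (Fin 2) (ZMod p)) 1 0 = v 0 ∧
       v 0 * (A : Matrix (Fin 2) (Fin 2) (ZMod p)) 0 1 +
        v 1 * (A : Matrix (Fin 2) (Fin 2) (ZMod p)) 1 1 = v 1) := by
  rw [funext_iff, Fin.forall_fin_two]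
  simp [Matrix.vecMul, dotProduct, Fin.sum_univ_two]

open scoped Classical in
lemma card_rowFix (A : Matrix.SpecialLinearGroup (Fin 2) (ZMod p)) :
    Nat.card (rowFix p A) =
      if A = 1 then p ^ 2
      else if Matrix.trace (A : Matrix (Fin 2) (Fin 2) (ZMod p)) = 2 then p else 1 := by
  set a := (A : Matrix (Fin 2) (Fin 2) (ZMod p)) 0 0 with ha
  set b := (A : Matrix (Fin 2) (Fin 2) (ZMod p)) 0 1 with hb
  set c := (A : Matrix (Fin 2) (Fin 2) (ZMod p)) 1 0 with hc
  set d := (A : Matrix (Fin 2) (Fin 2) (ZMod p)) 1 1 with hd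
  have hdet : a * d - b * c = 1 := by
    have h := A.2
    rw [Matrix.det_fin_two] at h
    exact h
  by_cases h1 : A = 1
  · rw [if_pos h1]
    subst h1
    have e : rowFix p 1 ≃ (Fin 2 → ZMod p) :=
      Equiv.subtypeUnivEquiv (fun v => by simp)
    rw [Nat.card_congr e, Nat.card_fun, Nat.card_eq_fintype_card, ZMod.card,
      Nat.card_eq_fintype_card, Fintype.card_fin]
  · rw [if_neg h1]
    by_cases htr : Matrix.trace (A : Matrix (Fin 2) (Fin 2) (ZMod p)) = 2
    · rw [if_pos htr]
      rw [Matrix.trace_fin_two] at htr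
      -- htr : a + d = 2
      have hbc : b * c = -(a - 1) ^ 2 := by
        rw [← ha, ← hd] at htr
        linear_combination a * htr - hdet
      rw [← ha, ← hd] at htr
      by_cases hc0 : c = 0
      · -- then a = 1, d = 1, b ≠ 0
        have hsq : (a - 1) ^ 2 = 0 := by linear_combination hbc - b * hc0
        have ha1 : a = 1 := by
          have h2 : a - 1 = 0 := pow_eq_zero_iff (two_ne_zero) |>.mp hsq
          linear_combination h2
        have hd1 : d = 1 := by linear_combination htr - ha1
        have hb0 : b ≠ 0 := by
          intro hb0
          apply h1
          apply Subtype.ext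
          ext i j
          fin_cases i <;> fin_cases j <;>
            simp [Matrix.SpecialLinearGroup.coe_one, Matrix.one_apply, ← ha, ← hb, ← hc, ← hd,
              ha1, hb0, hc0, hd1]
        have e : ZMod p ≃ rowFix p A :=
          { toFun := fun t => ⟨![0, t], by
              rw [mem_rowFix_iff, ← ha, ← hb, ← hc, ← hd]
              simp [hc0, ha1, hd1, hb0]⟩
            invFun := fun v => v.1 1
            left_inv := fun t => by simp
            right_inv := fun v => by
              apply Subtype.ext
              have hv := (mem_rowFix_iff p A v.1).mp v.2
              rw [← ha, ← hb, ← hc, ← hd] at hv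
              have hv0 : v.1 0 = 0 := by
                rcases mul_eq_zero.mp (show v.1 0 * b = 0 by
                  linear_combination hv.2 - v.1 1 * hd1 - (v.1 1 - v.1 1) * hd1) with h | h
                · exact h
                · exact absurd h hb0
              funext i
              fin_cases i <;> simp [hv0] }
        rw [← Nat.card_congr e, Nat.card_eq_fintype_card, ZMod.card]
      · have e : ZMod p ≃ rowFix p A :=
          { toFun := fun t => ⟨![t, -(a - 1) * t * c⁻¹], by
              rw [mem_rowFix_iff, ← ha, ← hb, ← hc, ← hd]
              constructor
              · simp only [Matrix.cons_val_zero, Matrix.cons_val_one, Matrix.head_cons]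
                field_simp
                ring
              · simp only [Matrix.cons_val_zero, Matrix.cons_val_one, Matrix.head_cons]
                field_simp
                linear_combination t * hbc - t * (a - 1) * htr⟩
            invFun := fun v => v.1 0
            left_inv := fun t => by simp
            right_inv := fun v => by
              apply Subtype.ext
              have hv := (mem_rowFix_iff p A v.1).mp v.2
              rw [← ha, ← hb, ← hc, ← hd] at hv
              funext i
              fin_cases i
              · simp
              · show -(a - 1) * v.1 0 * c⁻¹ = v.1 1
                field_simp
                linear_combination -hv.1 }
        rw [← Nat.card_congr e, Nat.card_eq_fintype_card, ZMod.card]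
    · rw [if_neg htr]
      rw [Matrix.trace_fin_two, ← ha, ← hd] at htr
      have hD : (a - 1) * (d - 1) - b * c = 2 - (a + d) := by linear_combination hdet
      have hDne : (a - 1) * (d - 1) - b * c ≠ 0 := by
        intro h0
        apply htr
        linear_combination hD - h0
      haveI : Unique (rowFix p A) :=
        { default := ⟨0, by simp [Matrix.zero_vecMul]⟩
          uniq := fun y => by
            apply Subtype.ext
            have hv := (mem_rowFix_iff p A y.1).mp y.2
            rw [← ha, ← hb, ← hc, ← hd] at hv
            have hx : y.1 0 * ((a - 1) * (d - 1) - b * c) = 0 := by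
              linear_combination (d - 1) * hv.1 - c * hv.2
            have hy : y.1 1 * ((a - 1) * (d - 1) - b * c) = 0 := by
              linear_combination (a - 1) * hv.2 - b * hv.1
            have hx0 : y.1 0 = 0 := by
              rcases mul_eq_zero.mp hx with h | h
              · exact h
              · exact absurd h hDne
            have hy0 : y.1 1 = 0 := by
              rcases mul_eq_zero.mp hy with h | h
              · exact h
              · exact absurd h hDne
            show y.1 = (0 : Fin 2 → ZMod p)
            funext i
            fin_cases i <;> simp [hx0, hy0] }
      rw [Nat.card_unique]

end RowFix
section Assemble

variable (p k : ℕ) [Fact p.Prime]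

lemma slOrbRel_iff (M N : Matrix (Fin k) (Fin 2) (ZMod p)) :
    slOrbRel p k M N ↔ (MulAction.orbitRel (Matrix.SpecialLinearGroup (Fin 2) (ZMod p))
      (Matrix (Fin k) (Fin 2) (ZMod p))) M N := by
  rw [MulAction.orbitRel_apply, MulAction.mem_orbit_iff]
  constructor
  · rintro ⟨A, rfl⟩
    refine ⟨A, ?_⟩
    rw [slAct_smul_def, Matrix.mul_assoc, ← Matrix.SpecialLinearGroup.coe_mul,
      mul_inv_cancel, Matrix.SpecialLinearGroup.coe_one, Matrix.mul_one]
  · rintro ⟨g, rfl⟩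
    refine ⟨g, ?_⟩
    rw [slAct_smul_def, Matrix.mul_assoc, ← Matrix.SpecialLinearGroup.coe_mul,
      inv_mul_cancel, Matrix.SpecialLinearGroup.coe_one, Matrix.mul_one]

lemma slOrbCount_eq : slOrbCount p k =
    Nat.card (Quotient (MulAction.orbitRel (Matrix.SpecialLinearGroup (Fin 2) (ZMod p))
      (Matrix (Fin k) (Fin 2) (ZMod p)))) := by
  apply Nat.card_congr
  exact Quot.congrRight (fun a b => slOrbRel_iff p k a b)

lemma card_fixedBy_eq (A : Matrix.SpecialLinearGroup (Fin 2) (ZMod p)) :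
    Nat.card (MulAction.fixedBy (Matrix (Fin k) (Fin 2) (ZMod p)) A) =
      (Nat.card (rowFix p A)) ^ k := by
  have e : MulAction.fixedBy (Matrix (Fin k) (Fin 2) (ZMod p)) A ≃ (Fin k → rowFix p A) :=
    { toFun := fun M => fun i => ⟨M.1 i, by
        have hM : M.1 * (A : Matrix (Fin 2) (Fin 2) (ZMod p)) = M.1 := by
          have h := M.2
          rw [MulAction.mem_fixedBy, slAct_smul_def] at h
          conv_lhs => rw [← h]
          rw [Matrix.mul_assoc, ← Matrix.SpecialLinearGroup.coe_mul,
            inv_mul_cancel, Matrix.SpecialLinearGroup.coe_one, Matrix.mul_one]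
        funext j
        rw [show (M.1 i ᵥ* (A : Matrix (Fin 2) (Fin 2) (ZMod p))) j
            = (M.1 * (A : Matrix (Fin 2) (Fin 2) (ZMod p))) i j by
          simp [Matrix.vecMul, Matrix.mul_apply, dotProduct], hM]⟩
      invFun := fun g => ⟨Matrix.of (fun i => (g i).1), by
        rw [MulAction.mem_fixedBy, slAct_smul_def]
        have hM : (Matrix.of (fun i => (g i).1) : Matrix (Fin k) (Fin 2) (ZMod p)) *
            (A : Matrix (Fin 2) (Fin 2) (ZMod p)) = Matrix.of (fun i => (g i).1) := by
          ext i j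
          rw [show ((Matrix.of (fun i => (g i).1) : Matrix (Fin k) (Fin 2) (ZMod p)) *
            (A : Matrix (Fin 2) (Fin 2) (ZMod p))) i j
              = ((g i).1 ᵥ* (A : Matrix (Fin 2) (Fin 2) (ZMod p))) j by
            simp [Matrix.vecMul, Matrix.mul_apply, dotProduct], (g i).2]
          rfl
        conv_lhs => rw [← hM]
        rw [Matrix.mul_assoc, ← Matrix.SpecialLinearGroup.coe_mul,
          mul_inv_cancel, Matrix.SpecialLinearGroup.coe_one, Matrix.mul_one]⟩
      left_inv := fun M => by apply Subtype.ext; rfl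
      right_inv := fun g => by funext i; apply Subtype.ext; rfl }
  rw [Nat.card_congr e, Nat.card_fun, Nat.card_eq_fintype_card (α := Fin k), Fintype.card_fin]

open scoped Classical in
lemma key_count :
    (slOrbCount p k : ℤ) * ((p : ℤ) ^ 3 - p) =
      ((p : ℤ) ^ 3 - p) + (p : ℤ) ^ 2 * ((p : ℤ) ^ k - 1) + (p : ℤ) ^ (2 * k) - (p : ℤ) ^ k := by
  haveI : Fintype (Quotient (MulAction.orbitRel (Matrix.SpecialLinearGroup (Fin 2) (ZMod p))
      (Matrix (Fin k) (Fin 2) (ZMod p)))) := by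
    haveI := Quotient.finite (MulAction.orbitRel (Matrix.SpecialLinearGroup (Fin 2) (ZMod p))
      (Matrix (Fin k) (Fin 2) (ZMod p)))
    exact Fintype.ofFinite _
  have hb := MulAction.sum_card_fixedBy_eq_card_orbits_mul_card_group
    (Matrix.SpecialLinearGroup (Fin 2) (ZMod p)) (Matrix (Fin k) (Fin 2) (ZMod p))
  -- convert to Nat.card and ℤ
  have hb' : ∑ A : Matrix.SpecialLinearGroup (Fin 2) (ZMod p),
      (Nat.card (MulAction.fixedBy (Matrix (Fin k) (Fin 2) (ZMod p)) A) : ℤ) =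
      (slOrbCount p k : ℤ) * (Nat.card (Matrix.SpecialLinearGroup (Fin 2) (ZMod p)) : ℤ) := by
    rw [slOrbCount_eq]
    push_cast
    rw_mod_cast [Nat.card_eq_fintype_card, Nat.card_eq_fintype_card]
    rw [← hb]
    push_cast
    apply Finset.sum_congr rfl
    intro A _
    rw [Nat.card_eq_fintype_card]
  have hsummand : ∀ A : Matrix.SpecialLinearGroup (Fin 2) (ZMod p),
      (Nat.card (MulAction.fixedBy (Matrix (Fin k) (Fin 2) (ZMod p)) A) : ℤ) =
        1 + (if Matrix.trace (A : Matrix (Fin 2) (Fin 2) (ZMod p)) = 2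
              then (p : ℤ) ^ k - 1 else 0) +
          (if A = 1 then (p : ℤ) ^ (2 * k) - (p : ℤ) ^ k else 0) := by
    intro A
    rw [card_fixedBy_eq, card_rowFix]
    by_cases hA : A = 1
    · have htr : Matrix.trace ((1 : Matrix.SpecialLinearGroup (Fin 2) (ZMod p)) :
          Matrix (Fin 2) (Fin 2) (ZMod p)) = 2 := by
        rw [Matrix.SpecialLinearGroup.coe_one, Matrix.trace_one]
        simp
      subst hA
      rw [if_pos rfl, if_pos rfl, if_pos htr]
      push_cast
      rw [pow_mul]
      push_cast
      ring
    · rw [if_neg hA, if_neg hA]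
      by_cases htr : Matrix.trace (A : Matrix (Fin 2) (Fin 2) (ZMod p)) = 2
      · rw [if_pos htr, if_pos htr]
        push_cast
        ring
      · rw [if_neg htr, if_neg htr]
        push_cast
        ring
  rw [Finset.sum_congr rfl (fun A _ => hsummand A)] at hb'
  rw [Finset.sum_add_distrib, Finset.sum_add_distrib, Finset.sum_const, sum_if_card,
    sum_if_card] at hb'
  rw [card_SL] at hb'
  have htr2 := card_trace2 p
  rw [htr2] at hb'
  have h11 : (Nat.card {A : Matrix.SpecialLinearGroup (Fin 2) (ZMod p) // A = 1} : ℤ) = 1 := by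
    rw [Nat.card_eq_fintype_card, Fintype.card_subtype_eq]
    simp
  rw [h11] at hb'
  rw [← hb']
  rw [Finset.card_univ, nsmul_eq_mul, mul_one, ← Nat.card_eq_fintype_card, card_SL]
  ring

end Assemble

theorem orbit_count_difference (p n : ℕ) [Fact p.Prime] (hn : 1 ≤ n) :
    (slOrbCount p (n + 1) : ℤ) - slOrbCount p n =
      (p : ℤ) ^ (n - 1) * ((p : ℤ) ^ n + p - 1) := by
  obtain ⟨m, rfl⟩ : ∃ m, n = m + 1 := ⟨n - 1, by omega⟩
  have h1 := key_count p (m + 1 + 1)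
  have h2 := key_count p (m + 1)
  have hp2 : (2 : ℤ) ≤ (p : ℤ) := by exact_mod_cast (Fact.out : p.Prime).two_le
  have hC : ((p : ℤ) ^ 3 - p) ≠ 0 := by nlinarith
  apply mul_right_cancel₀ hC
  simp only [Nat.add_sub_cancel]
  rw [sub_mul, h1, h2]
  ring
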